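/- Let A be a finite-dimensional algebra over a field F with char(F) ≠ 2, and let D : A → A be a linear map satisfying xD(x)x ∈ [A,A] for every x ∈ A. Then D(M) ⊆ M for every maximal two-sided ideal M of A; in particular D(rad(A)) ⊆ rad(A). -/

import Mathlib

section Aux

variable (K C Q : Type*) [Field K] [IsAlgClosed K] [Ring C] [Algebra K C]
  [AddCommGroup Q] [Module C Q] [Module K Q] [IsScalarTower K C Q]

omit [IsAlgClosed K] in
theorem smul_comm_aux (a : C) (k : K) (q : Q) : a • (k • q) = k • (a • q) := by
  rw [← algebraMap_smul C k q, ← mul_smul, ← Algebra.commutes k a, mul_smul,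
    algebraMap_smul]

variable [FiniteDimensional K Q]

theorem schur_aux (V : Submodule C Q) (hV : IsAtom V) (φ : V →ₗ[C] V) :
    ∃ k : K, ∀ v : V, φ v = k • v := by
  haveI : SMulCommClass C K V := ⟨fun a k v => by
    apply Subtype.ext
    show a • ((k • v : V) : Q) = ((k • (a • v) : V) : Q)
    rw [SetLike.val_smul_of_tower, SetLike.val_smul_of_tower]
    exact smul_comm_aux K C Q a k v.1⟩
  letI : Module K (V →ₗ[C] V) := LinearMap.module
  have hsm : ∀ (k : K) (f : V →ₗ[C] V) (v : V), (k • f) v = k • f v := fun _ _ _ => rfl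
  letI : Algebra K (V →ₗ[C] V) := Algebra.ofModule
    (fun k f g => LinearMap.ext fun v => hsm k (f * g) v)
    (fun k f g => LinearMap.ext fun v => by
      show f ((k • g) v) = (k • (f * g)) v
      rw [hsm, hsm, ← algebraMap_smul (A := C) (M := V) k, map_smul, algebraMap_smul]
      rfl)
  haveI : FiniteDimensional K V := FiniteDimensional.of_injective
    ((V.subtype).restrictScalars K) (fun a b h => Subtype.ext h)
  haveI : FiniteDimensional K (V →ₗ[C] V) := by
    let ι : (V →ₗ[C] V) →ₗ[K] (V →ₗ[K] V) :=
      { toAddHom := ⟨fun f => f.restrictScalars K, fun f g => rfl⟩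
        map_smul' := fun k f => rfl }
    refine FiniteDimensional.of_injective ι (fun f g h => ?_)
    have h2 := fun v => congrArg (fun (ψ : V →ₗ[K] V) => ψ v) h
    exact LinearMap.ext fun v => h2 v
  haveI : IsSimpleModule C V := isSimpleModule_iff_isAtom.2 hV
  haveI : Nontrivial V := IsSimpleModule.nontrivial C V
  haveI : Nontrivial (V →ₗ[C] V) := by
    obtain ⟨v, hv⟩ := exists_ne (0 : V)
    exact ⟨1, 0, fun h => hv (by simpa using DFunLike.congr_fun h v)⟩
  obtain ⟨k, hk⟩ := spectrum.nonempty_of_isAlgClosed_of_finiteDimensional K φ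
  rw [spectrum.mem_iff] at hk
  letI := Classical.decEq (Module.End C V)
  letI : DivisionRing (Module.End C V) := Module.End.instDivisionRing
  have hz : algebraMap K (V →ₗ[C] V) k - φ = 0 := by
    by_contra h
    exact hk (IsUnit.mk0 _ h)
  have hφ : φ = algebraMap K (V →ₗ[C] V) k := by
    rwa [sub_eq_zero, eq_comm] at hz
  exact ⟨k, fun v => by rw [hφ]; exact hsm k 1 v⟩

theorem density_aux (V : Submodule C Q) (hV : IsAtom V) {n : ℕ} (v : Fin n → V)
    (hli : LinearIndependent K v) (w : Fin n → V) : ∃ a : C, ∀ i, a • v i = w i := by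
  haveI : IsSimpleModule C V := isSimpleModule_iff_isAtom.2 hV
  haveI : IsSemisimpleModule C V := inferInstance
  have hinj : ∀ i : Fin n, Function.Injective (LinearMap.single C (fun _ : Fin n => V) i) := by
    intro i a b h
    have := congrFun h i
    rwa [LinearMap.single_apply, LinearMap.single_apply, Pi.single_eq_same,
      Pi.single_eq_same] at this
  have hdec : ∀ (x : Fin n → V), x = ∑ i, LinearMap.single C (fun _ : Fin n => V) i (x i) := by
    intro x
    funext j
    rw [Finset.sum_apply]
    symm
    simp only [LinearMap.single_apply]
    rw [Finset.sum_pi_single]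
    simp
  haveI : IsSemisimpleModule C (Fin n → V) := by
    refine isSemisimpleModule_of_isSemisimpleModule_submodule'
      (p := fun i => LinearMap.range (LinearMap.single C (fun _ : Fin n => V) i)) ?_ ?_
    · intro i
      exact IsSemisimpleModule.congr
        (LinearEquiv.ofInjective (LinearMap.single C (fun _ : Fin n => V) i) (hinj i)).symm
    · rw [eq_top_iff]
      intro x _
      rw [hdec x]
      exact Submodule.sum_mem _ fun i _ =>
        (le_iSup (fun i => LinearMap.range (LinearMap.single C (fun _ : Fin n => V) i)) i)
          (LinearMap.mem_range_self _ _)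
  set U : Submodule C (Fin n → V) := Submodule.span C {v} with hU
  obtain ⟨U', hU'⟩ := exists_isCompl U
  set e : (Fin n → V) →ₗ[C] (Fin n → V) :=
    U.subtype ∘ₗ (Submodule.linearProjOfIsCompl U U' hU') with he
  have heU : ∀ x : Fin n → V, e x ∈ U := fun x => (Submodule.linearProjOfIsCompl U U' hU' x).2
  have heid : ∀ x ∈ U, e x = x := by
    intro x hx
    show (Submodule.linearProjOfIsCompl U U' hU' x : Fin n → V) = x
    exact congrArg Subtype.val (Submodule.projectionOnto_apply_left hU' ⟨x, hx⟩)
  have hc : ∀ i j : Fin n, ∃ k : K, ∀ u : V,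
      e (LinearMap.single C (fun _ : Fin n => V) j u) i = k • u := by
    intro i j
    obtain ⟨k, hk⟩ := schur_aux K C Q V hV
      ((LinearMap.proj i) ∘ₗ e ∘ₗ (LinearMap.single C (fun _ : Fin n => V) j))
    exact ⟨k, fun u => hk u⟩
  choose c hcc using hc
  have hcomp : ∀ x : Fin n → V, ∀ i, e x i = ∑ j, c i j • x j := by
    intro x i
    conv_lhs => rw [hdec x]
    rw [map_sum]
    rw [Finset.sum_apply]
    exact Finset.sum_congr rfl fun j _ => hcc i j (x j)
  have hvU : v ∈ U := Submodule.subset_span rfl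
  have hev : ∀ i, (∑ j, c i j • v j) = v i := by
    intro i
    rw [← hcomp v i, heid v hvU]
  have hcdelta : ∀ i j, c i j = if i = j then 1 else 0 := by
    intro i j
    have h0 : (∑ j, (c i j - if i = j then 1 else 0) • v j) = 0 := by
      have : (∑ j, ((if i = j then (1:K) else 0) • v j)) = v i := by
        rw [Finset.sum_congr rfl (fun j _ => by
          rw [ite_smul, one_smul, zero_smul])]
        exact (Finset.sum_ite_eq Finset.univ i v).trans (if_pos (Finset.mem_univ i))
      simp only [sub_smul, Finset.sum_sub_distrib, hev i, this, sub_self]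
    have := Fintype.linearIndependent_iff.1 hli _ h0 j
    exact eq_of_sub_eq_zero this
  have heid' : ∀ x : Fin n → V, e x = x := by
    intro x
    funext i
    rw [hcomp x i]
    have : (∑ j, c i j • x j) = ∑ j, (if i = j then (1:K) else 0) • x j :=
      Finset.sum_congr rfl fun j _ => by rw [hcdelta i j]
    rw [this, Finset.sum_congr rfl (fun j _ => by rw [ite_smul, one_smul, zero_smul])]
    exact (Finset.sum_ite_eq Finset.univ i x).trans (if_pos (Finset.mem_univ i))
  have hUtop : w ∈ U := by
    rw [← heid' w]
    exact heU w
  rw [hU, Submodule.mem_span_singleton] at hUtop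
  obtain ⟨a, ha⟩ := hUtop
  exact ⟨a, fun i => by rw [← ha]; rfl⟩

end Aux

section Key

variable (K C : Type*) [Field K] [IsAlgClosed K] [Ring C] [Algebra K C]
    [FiniteDimensional K C]

theorem key_lemma (J : Submodule K C) (hJ : J ≠ ⊤)
    (hL : ∀ (c x : C), x ∈ J → c * x ∈ J)
    (hR : ∀ (c x : C), x ∈ J → x * c ∈ J) :
    Submodule.span K {z : C | ∃ u v : C, z = u * v - v * u} ⊔ J ≠ ⊤ := by
  intro htop
  classical
  let J' : Submodule C C :=
    { carrier := J
      add_mem' := fun h1 h2 => J.add_mem h1 h2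
      zero_mem' := J.zero_mem
      smul_mem' := fun c x hx => by simpa [smul_eq_mul] using hL c x hx }
  have hJ' : J' ≠ ⊤ := by
    intro h
    apply hJ
    rw [eq_top_iff]
    intro x _
    exact (show x ∈ J' from h ▸ Submodule.mem_top)
  haveI : Nontrivial (C ⧸ J') :=
    Submodule.Quotient.nontrivial_iff.2 hJ'
  let ℓ : C →ₗ[K] C ⧸ J' :=
    { toAddHom := ⟨Submodule.Quotient.mk, fun x y => by simp⟩
      map_smul' := fun k x => Submodule.Quotient.mk_smul J' k x }
  haveI : Module.Finite K (C ⧸ J') := Module.Finite.of_surjective ℓ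
    (Submodule.Quotient.mk_surjective _)
  haveI : IsArtinian C (C ⧸ J') :=
    isArtinian_of_tower (R := K) (S := C) (M := C ⧸ J') inferInstance
  haveI : IsAtomic (Submodule C (C ⧸ J')) := inferInstance
  obtain ⟨V, hV⟩ : ∃ V : Submodule C (C ⧸ J'), IsAtom V := by
    rcases eq_bot_or_exists_atom_le (⊤ : Submodule C (C ⧸ J')) with h | ⟨V, hV, -⟩
    · obtain ⟨x, y, hxy⟩ := exists_pair_ne (C ⧸ J')
      exfalso
      apply hxy
      have hx : x ∈ (⊥ : Submodule C (C ⧸ J')) := h ▸ Submodule.mem_top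
      have hy : y ∈ (⊥ : Submodule C (C ⧸ J')) := h ▸ Submodule.mem_top
      rw [Submodule.mem_bot] at hx hy
      rw [hx, hy]
    · exact ⟨V, hV⟩
  haveI : IsSimpleModule C V := isSimpleModule_iff_isAtom.2 hV
  haveI : Nontrivial V := IsSimpleModule.nontrivial C V
  haveI : FiniteDimensional K V := FiniteDimensional.of_injective
    ((V.subtype).restrictScalars K) (fun a b h => Subtype.ext h)
  -- the representation ρ : C → End_K(V)
  let ρ : C →ₗ[K] (V →ₗ[K] V) :=
    { toAddHom := ⟨fun a =>
        { toAddHom := ⟨fun v => a • v, fun v w => smul_add a v w⟩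
          map_smul' := fun k v => by
            apply Subtype.ext
            show a • ((k • v : V) : C ⧸ J') = ((k • (a • v) : V) : C ⧸ J')
            rw [SetLike.val_smul_of_tower, SetLike.val_smul_of_tower]
            exact smul_comm_aux K C _ a k v.1 },
        fun a b => LinearMap.ext fun v => by
          apply Subtype.ext
          show ((a + b) • v : V).1 = ((a • v : V) + (b • v : V)).1
          simp [add_smul]⟩
      map_smul' := fun k a => LinearMap.ext fun v => by
        apply Subtype.ext
        show ((k • a) • v : V).1 = ((k • ((a • v : V)) : V)).1
        rw [SetLike.val_smul_of_tower]
        show ((k • a) • v.1) = k • (a • v.1)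
        rw [← algebraMap_smul C k a, smul_eq_mul, mul_smul, algebraMap_smul] }
  have hρmul : ∀ a b : C, ρ (a * b) = ρ a * ρ b := fun a b =>
    LinearMap.ext fun v => by
      apply Subtype.ext
      show ((a * b) • v : V).1 = (a • (b • v) : V).1
      simp [mul_smul]
  let lam : C →ₗ[K] K := (LinearMap.trace K V) ∘ₗ ρ
  have hcomm0 : ∀ z ∈ {z : C | ∃ u v : C, z = u * v - v * u}, lam z = 0 := by
    rintro z ⟨u, w, rfl⟩
    show (LinearMap.trace K V) (ρ (u * w - w * u)) = 0
    rw [map_sub, map_sub, hρmul, hρmul, LinearMap.trace_mul_comm, sub_self]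
  have hJ0 : ∀ x ∈ J, ρ x = 0 := by
    intro x hx
    apply LinearMap.ext
    intro v
    apply Subtype.ext
    show x • (v : C ⧸ J') = ((0 : V) : C ⧸ J')
    obtain ⟨c, hc⟩ := Submodule.Quotient.mk_surjective J' (v : C ⧸ J')
    rw [← hc, ← Submodule.Quotient.mk_smul, smul_eq_mul]
    rw [show ((0 : V) : C ⧸ J') = 0 from rfl, Submodule.Quotient.mk_eq_zero]
    exact hR c x hx
  -- a nonzero value of lam
  obtain ⟨v₀, hv₀⟩ := exists_ne (0 : V)
  have hφex : ¬ ∀ φ : Module.Dual K V, φ v₀ = 0 := by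
    rw [Module.forall_dual_apply_eq_zero_iff]
    exact hv₀
  push_neg at hφex
  obtain ⟨φ, hφ⟩ := hφex
  let f : V →ₗ[K] V := dualTensorHom K V V (φ ⊗ₜ v₀)
  have htr : LinearMap.trace K V f = φ v₀ := by
    rw [LinearMap.trace_eq_contract_apply, contractLeft_apply]
  let b := Module.finBasis K V
  obtain ⟨a, ha⟩ := density_aux K C (C ⧸ J') V hV b b.linearIndependent (fun i => f (b i))
  have hρa : ρ a = f := by
    apply b.ext
    intro i
    exact ha i
  have hlama : lam a ≠ 0 := by
    show LinearMap.trace K V (ρ a) ≠ 0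
    rw [hρa, htr]
    exact hφ
  -- but lam vanishes on ⊤
  apply hlama
  have hmem : a ∈ Submodule.span K {z : C | ∃ u v : C, z = u * v - v * u} ⊔ J := by
    rw [htop]; exact Submodule.mem_top
  rw [Submodule.mem_sup] at hmem
  obtain ⟨s, hs, j, hj, rfl⟩ := hmem
  rw [map_add]
  have h1 : lam s = 0 := by
    refine Submodule.span_induction (fun z hz => hcomm0 z hz) (map_zero lam) ?_ ?_ hs
    · intro u v _ _ hu hv
      rw [map_add, hu, hv, add_zero]
    · intro k u _ hu
      rw [map_smul, hu, smul_zero]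
  have h2 : lam j = 0 := by
    show LinearMap.trace K V (ρ j) = 0
    rw [hJ0 j hj, map_zero]
  rw [h1, h2, add_zero]
end Key

noncomputable def ringRad (A : Type*) [Ring A] : TwoSidedIdeal A :=
  sInf {M : TwoSidedIdeal A | IsCoatom M}

open TensorProduct in
theorem maximal_ideals_invariant_of_sandwich_commutator (F A : Type*) [Field F] [Ring A]
    [Algebra F A] [FiniteDimensional F A] (h2 : (2 : F) ≠ 0) (D : A →ₗ[F] A)
    (hD : ∀ x : A, x * D x * x ∈
      Submodule.span F {z : A | ∃ u v : A, z = u * v - v * u}) :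
    (∀ M : TwoSidedIdeal A, IsCoatom M → ∀ x ∈ M, D x ∈ M) ∧
      ∀ x ∈ ringRad A, D x ∈ ringRad A := by
  classical
  set S : Submodule F A := Submodule.span F {z : A | ∃ u v : A, z = u * v - v * u} with hSdef
  have hcommS : ∀ u v : A, u * v - v * u ∈ S := fun u v =>
    Submodule.subset_span ⟨u, v, rfl⟩
  have hP : ∀ x y z : A,
      x*(D y)*z + x*(D z)*y + y*(D x)*z + y*(D z)*x + z*(D x)*y + z*(D y)*x ∈ S := by
    intro x y z
    have e1 := hD (x + y + z)
    have e2 := hD (x + y)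
    have e3 := hD (x + z)
    have e4 := hD (y + z)
    have e5 := hD x
    have e6 := hD y
    have e7 := hD z
    have hiden : x*(D y)*z + x*(D z)*y + y*(D x)*z + y*(D z)*x + z*(D x)*y + z*(D y)*x
        = ((x+y+z) * D (x+y+z) * (x+y+z) + (x * D x * x + y * D y * y + z * D z * z))
          - ((x+y) * D (x+y) * (x+y) + (x+z) * D (x+z) * (x+z) + (y+z) * D (y+z) * (y+z)) := by
      simp only [map_add]
      noncomm_ring
    rw [hiden]
    exact Submodule.sub_mem _
      (Submodule.add_mem _ e1 (Submodule.add_mem _ (Submodule.add_mem _ e5 e6) e7))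
      (Submodule.add_mem _ (Submodule.add_mem _ e2 e3) e4)
  have main : ∀ M : TwoSidedIdeal A, IsCoatom M → ∀ x ∈ M, D x ∈ M := by
    intro M hM x hx
    by_contra hb
    -- the ideal as a submodule
    let Msub : Submodule F A :=
      { carrier := {a : A | a ∈ M}
        add_mem' := fun h1 h2 => M.add_mem h1 h2
        zero_mem' := M.zero_mem
        smul_mem' := fun c a ha => by
          show c • a ∈ M
          rw [Algebra.smul_def]
          exact M.mul_mem_left _ _ ha }
    set W : Submodule F A := S ⊔ Msub with hWdef
    have hSW : S ≤ W := le_sup_left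
    have hMW : Msub ≤ W := le_sup_right
    have st1 : ∀ y z : A, y*(D x)*z + z*(D x)*y ∈ W := by
      intro y z
      have h6 := hP x y z
      have hmem : x*(D y)*z + x*(D z)*y + y*(D z)*x + z*(D y)*x ∈ Msub := by
        refine Submodule.add_mem _ (Submodule.add_mem _ (Submodule.add_mem _ ?_ ?_) ?_) ?_
        · exact M.mul_mem_right _ _ (M.mul_mem_right _ _ hx)
        · exact M.mul_mem_right _ _ (M.mul_mem_right _ _ hx)
        · exact M.mul_mem_left _ _ hx
        · exact M.mul_mem_left _ _ hx
      have hiden : y*(D x)*z + z*(D x)*y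
          = (x*(D y)*z + x*(D z)*y + y*(D x)*z + y*(D z)*x + z*(D x)*y + z*(D y)*x)
            - (x*(D y)*z + x*(D z)*y + y*(D z)*x + z*(D y)*x) := by abel
      rw [hiden]
      exact Submodule.sub_mem _ (hSW h6) (hMW hmem)
    have st2 : ∀ y : A, y * D x ∈ W := by
      intro y
      have h1 : y * D x + D x * y ∈ W := by simpa using st1 y 1
      have h2' : y * D x - D x * y ∈ W := hSW (hcommS y (D x))
      have h3 : (2 : F) • (y * D x) ∈ W := by
        have : (2 : F) • (y * D x) = (y * D x + D x * y) + (y * D x - D x * y) := by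
          rw [two_smul]; abel
        rw [this]
        exact Submodule.add_mem _ h1 h2'
      have := Submodule.smul_mem W ((2 : F)⁻¹) h3
      rwa [smul_smul, inv_mul_cancel₀ h2, one_smul] at this
    have st3 : ∀ y z : A, y * D x * z ∈ W := by
      intro y z
      have h1 : y * D x * z - z * (y * D x) ∈ W := hSW (hcommS (y * D x) z)
      have h2' : z * (y * D x) ∈ W := by
        rw [← mul_assoc]
        exact st2 (z * y)
      have : y * D x * z = (y * D x * z - z * (y * D x)) + z * (y * D x) := by abel
      rw [this]
      exact Submodule.add_mem _ h1 h2'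
    -- the two-sided ideal of elements sandwiched into W
    let N : TwoSidedIdeal A := TwoSidedIdeal.mk' {a : A | ∀ y z : A, y * a * z ∈ W}
      (fun y z => by simpa using W.zero_mem)
      (fun {a b} ha hb y z => by
        have : y * (a + b) * z = y * a * z + y * b * z := by noncomm_ring
        rw [this]; exact W.add_mem (ha y z) (hb y z))
      (fun {a} ha y z => by
        have : y * (-a) * z = -(y * a * z) := by noncomm_ring
        rw [this]; exact W.neg_mem (ha y z))
      (fun {c a} ha y z => by
        have : y * (c * a) * z = (y * c) * a * z := by noncomm_ring
        rw [this]; exact ha (y * c) z)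
      (fun {a c} ha y z => by
        have : y * (a * c) * z = y * a * (c * z) := by noncomm_ring
        rw [this]; exact ha y (c * z))
    have hbN : D x ∈ N := by
      rw [TwoSidedIdeal.mem_mk']
      exact fun y z => st3 y z
    have hMN : M ≤ N := by
      rw [TwoSidedIdeal.le_iff]
      intro a ha
      rw [SetLike.mem_coe, TwoSidedIdeal.mem_mk']
      intro y z
      exact hMW (M.mul_mem_right _ _ (M.mul_mem_left _ _ ha))
    have hNtop : N = ⊤ := hM.2 N (lt_of_le_of_ne hMN (fun h => hb (h ▸ hbN)))
    have hWtop : W = ⊤ := by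
      rw [eq_top_iff]
      intro a _
      have h1N : (1 : A) ∈ N := hNtop ▸ TwoSidedIdeal.mem_top A
      rw [TwoSidedIdeal.mem_mk'] at h1N
      simpa using h1N a 1
    -- base change to the algebraic closure
    set K := AlgebraicClosure F with hK
    have hAbar : FiniteDimensional K (K ⊗[F] A) := inferInstance
    set J : Submodule K (K ⊗[F] A) := Msub.baseChange K with hJdef
    have hgen : ∀ w ∈ Msub.map (TensorProduct.mk F K A 1), w ∈ J :=
      fun w hw => by rw [hJdef, Submodule.baseChange_eq_span]; exact Submodule.subset_span hw
    have hJL : ∀ (c x' : K ⊗[F] A), x' ∈ J → c * x' ∈ J := by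
      intro c x' hx'
      rw [hJdef, Submodule.baseChange_eq_span] at hx'
      induction hx' using Submodule.span_induction with
      | mem u hu =>
        obtain ⟨m, hm, rfl⟩ := hu
        induction c with
        | zero => rw [zero_mul]; exact J.zero_mem
        | tmul k a =>
          rw [show (TensorProduct.mk F K A 1) m = (1 : K) ⊗ₜ[F] m from rfl,
            Algebra.TensorProduct.tmul_mul_tmul]
          exact Submodule.tmul_mem_baseChange_of_mem _ (M.mul_mem_left _ _ hm)
        | add u v hu hv => rw [add_mul]; exact J.add_mem hu hv
      | zero => rw [mul_zero]; exact J.zero_mem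
      | add u v _ _ hu hv => rw [mul_add]; exact J.add_mem hu hv
      | smul k u _ hu => rw [mul_smul_comm]; exact J.smul_mem k hu
    have hJR : ∀ (c x' : K ⊗[F] A), x' ∈ J → x' * c ∈ J := by
      intro c x' hx'
      rw [hJdef, Submodule.baseChange_eq_span] at hx'
      induction hx' using Submodule.span_induction with
      | mem u hu =>
        obtain ⟨m, hm, rfl⟩ := hu
        induction c with
        | zero => rw [mul_zero]; exact J.zero_mem
        | tmul k a =>
          rw [show (TensorProduct.mk F K A 1) m = (1 : K) ⊗ₜ[F] m from rfl,
            Algebra.TensorProduct.tmul_mul_tmul]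
          exact Submodule.tmul_mem_baseChange_of_mem _ (M.mul_mem_right _ _ hm)
        | add u v hu hv => rw [mul_add]; exact J.add_mem hu hv
      | zero => rw [zero_mul]; exact J.zero_mem
      | add u v _ _ hu hv => rw [add_mul]; exact J.add_mem hu hv
      | smul k u _ hu => rw [smul_mul_assoc]; exact J.smul_mem k hu
    have hMsubTop : Msub ≠ ⊤ := by
      intro h
      have h1 : (1 : A) ∈ Msub := by rw [h]; exact Submodule.mem_top
      replace h1 : (1 : A) ∈ M := h1
      apply hM.1
      ext a
      simp only [TwoSidedIdeal.mem_top, iff_true]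
      have := M.mul_mem_left a 1 h1
      rwa [mul_one] at this
    have hJne : J ≠ ⊤ := by
      intro h
      have hle : J ≤ LinearMap.range (Msub.subtype.baseChange K) := by
        rw [hJdef]
        rw [Submodule.baseChange_eq_span]
        rw [Submodule.span_le]
        rintro w ⟨m, hm, rfl⟩
        exact ⟨(1 : K) ⊗ₜ[F] (⟨m, hm⟩ : Msub), rfl⟩
      have h1 : Module.finrank K J ≤ Module.finrank K (K ⊗[F] Msub) :=
        le_trans (Submodule.finrank_mono hle) (LinearMap.finrank_range_le _)
      rw [Module.finrank_baseChange] at h1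
      have h2 : Module.finrank F Msub < Module.finrank F A :=
        Submodule.finrank_lt hMsubTop
      rw [h] at h1
      rw [finrank_top] at h1
      rw [Module.finrank_baseChange] at h1
      omega
    have hSbar : S.baseChange K ≤
        Submodule.span K {z : K ⊗[F] A | ∃ u v : K ⊗[F] A, z = u * v - v * u} := by
      rw [hSdef, Submodule.baseChange_span, Submodule.span_le]
      rintro w ⟨z, ⟨u, v, rfl⟩, rfl⟩
      apply Submodule.subset_span
      refine ⟨(1 : K) ⊗ₜ[F] u, (1 : K) ⊗ₜ[F] v, ?_⟩
      rw [show (TensorProduct.mk F K A 1) (u * v - v * u) = (1:K) ⊗ₜ[F] (u*v - v*u) from rfl,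
        TensorProduct.tmul_sub, Algebra.TensorProduct.tmul_mul_tmul,
        Algebra.TensorProduct.tmul_mul_tmul, one_mul]
    have hsup : Submodule.span K {z : K ⊗[F] A | ∃ u v : K ⊗[F] A, z = u * v - v * u} ⊔ J = ⊤ := by
      rw [eq_top_iff]
      have htop' : (⊤ : Submodule K (K ⊗[F] A)) = (⊤ : Submodule F A).baseChange K :=
        (Submodule.baseChange_top (A := K) (R := F) (M := A)).symm
      rw [htop', ← hWtop, hWdef]
      rw [Submodule.baseChange_eq_span]
      rw [Submodule.span_le]
      rintro w ⟨m, hm, rfl⟩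
      rw [SetLike.mem_coe, Submodule.mem_sup] at hm
      obtain ⟨s, hs, m', hm', rfl⟩ := hm
      rw [SetLike.mem_coe, map_add]
      apply Submodule.add_mem
      · apply Submodule.mem_sup_left
        exact hSbar (Submodule.tmul_mem_baseChange_of_mem _ hs)
      · apply Submodule.mem_sup_right
        exact Submodule.tmul_mem_baseChange_of_mem _ hm'
    exact key_lemma K (K ⊗[F] A) J hJne hJL hJR hsup
  refine ⟨main, ?_⟩
  intro x hx
  rw [ringRad, TwoSidedIdeal.mem_sInf] at hx ⊢
  intro M hM
  exact main M hM x (hx M hM)
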